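/- Fix d ≥ 1 and a positive integer α. There is a constant C > 0, depending only on d and α, with the following property: for every Banach space V, every family (F_X) of elements of V indexed by the bricks X of ℤ^d, and all distinct points j, k ∈ ℤ^d, if there are constants C_j, C_k ≥ 0 such that ‖F_X‖ · (1 + diam(X ∪ {j}))^{α+2d+1} ≤ C_j and ‖F_X‖ · (1 + diam(X ∪ {k}))^{α+2d+1} ≤ C_k for every brick X, then the family (F_X) is absolutely summable and ‖∑_X F_X‖ ≤ C · (C_j + C_k) · (1 + d(j,k))^{−α}. -/

import Mathlib

/-- A brick in `ℤ^d`: a nonempty product of finite integer intervals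
`∏_{i=1}^d ([a_i, b_i] ∩ ℤ)` with `a_i ≤ b_i`. -/
def IsBrick (d : ℕ) (X : Set (Fin d → ℤ)) : Prop :=
  ∃ a b : Fin d → ℤ, (∀ i, a i ≤ b i) ∧ X = {x | ∀ i, a i ≤ x i ∧ x i ≤ b i}

universe u

noncomputable def texp (d : ℕ) : ℝ := (2 * (d : ℝ) + 1) / 2

lemma aux1 {s : ℝ} (hs : 1 < s) :
    Summable fun n : ℤ => ((1 : ℝ) + |(n : ℝ)|) ^ (-s) := by
  have h := Real.summable_abs_int_rpow hs
  refine Summable.of_norm_bounded_eventually h ?_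
  filter_upwards [Filter.eventually_cofinite_ne (0 : ℤ)] with n hn
  have hn' : ((n : ℝ)) ≠ 0 := Int.cast_ne_zero.mpr hn
  have h0 : (0 : ℝ) < |(n : ℝ)| := abs_pos.mpr hn'
  rw [Real.norm_of_nonneg (Real.rpow_nonneg (by positivity) _)]
  exact Real.rpow_le_rpow_of_nonpos h0 (by linarith) (by linarith)

lemma aux2 {g : ℤ → ℝ} (hg0 : ∀ n, 0 ≤ g n) (hg : Summable g) :
    ∀ n : ℕ, Summable fun z : Fin n → ℤ => ∏ i, g (z i) := by
  intro n
  induction n with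
  | zero =>
      haveI : Subsingleton (Fin 0 → ℤ) := ⟨fun a b => funext fun i => i.elim0⟩
      haveI : Finite (Fin 0 → ℤ) := Finite.of_subsingleton
      exact Summable.of_finite
  | succ n ih =>
      refine (Fin.consEquiv (fun _ : Fin (n + 1) => ℤ)).summable_iff.mp ?_
      refine (hg.mul_of_nonneg ih (fun _ => hg0 _)
        (fun _ => Finset.prod_nonneg fun _ _ => hg0 _)).congr ?_
      rintro ⟨x, q⟩
      simp [Fin.consEquiv, Fin.prod_univ_succ]

lemma aux3 (d : ℕ) (hd : 1 ≤ d) :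
    Summable fun z : Fin d → ℤ => ((1 : ℝ) + ‖z‖) ^ (-texp d) := by
  have hd0 : (0 : ℝ) < d := by exact_mod_cast hd
  set s : ℝ := (2 * (d : ℝ) + 1) / (2 * d) with hs_def
  have hs : 1 < s := by
    rw [hs_def, lt_div_iff₀ (by positivity)]
    linarith
  have hsum := aux2 (g := fun n : ℤ => ((1 : ℝ) + |(n : ℝ)|) ^ (-s))
    (fun n => Real.rpow_nonneg (by positivity) _) (aux1 hs) d
  refine hsum.of_nonneg_of_le (fun z => Real.rpow_nonneg (by positivity) _) ?_
  intro z
  have hz0 : (0 : ℝ) ≤ 1 + ‖z‖ := by positivity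
  have hprod : ∏ i, ((1 : ℝ) + |((z i : ℤ) : ℝ)|) ≤ (1 + ‖z‖) ^ (d : ℕ) := by
    calc ∏ i, ((1 : ℝ) + |((z i : ℤ) : ℝ)|)
        ≤ ∏ _i : Fin d, (1 + ‖z‖) := by
          refine Finset.prod_le_prod (fun i _ => by positivity) (fun i _ => ?_)
          have h1 := norm_le_pi_norm z i
          rw [Int.norm_eq_abs] at h1
          linarith
      _ = (1 + ‖z‖) ^ (d : ℕ) := by
          rw [Finset.prod_const, Finset.card_univ, Fintype.card_fin]
  have hP0 : (0 : ℝ) < ∏ i, ((1 : ℝ) + |((z i : ℤ) : ℝ)|) :=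
    Finset.prod_pos fun i _ => by positivity
  have h1 : (∏ i, ((1 : ℝ) + |((z i : ℤ) : ℝ)|) ^ (-s)) =
      (∏ i, ((1 : ℝ) + |((z i : ℤ) : ℝ)|)) ^ (-s) :=
    Real.finset_prod_rpow _ _ (fun i _ => by positivity) _
  rw [h1, Real.rpow_neg hP0.le, Real.rpow_neg hz0]
  have hmain : (∏ i, ((1 : ℝ) + |((z i : ℤ) : ℝ)|)) ^ s ≤ (1 + ‖z‖) ^ (texp d) := by
    calc (∏ i, ((1 : ℝ) + |((z i : ℤ) : ℝ)|)) ^ s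
        ≤ ((1 + ‖z‖) ^ (d : ℕ)) ^ s := Real.rpow_le_rpow hP0.le hprod (by linarith)
      _ = (1 + ‖z‖) ^ ((d : ℝ) * s) := by
          rw [← Real.rpow_natCast (1 + ‖z‖) d, ← Real.rpow_mul hz0]
      _ = (1 + ‖z‖) ^ (texp d) := by
          congr 1
          rw [hs_def, texp]
          field_simp
  have hps : (0 : ℝ) < (∏ i, ((1 : ℝ) + |((z i : ℤ) : ℝ)|)) ^ s :=
    Real.rpow_pos_of_pos hP0 _
  exact inv_anti₀ hps hmain

lemma key_ineq (d α : ℕ) {x CC D u v w : ℝ} (hx : 0 ≤ x)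
    (hu : 0 ≤ u) (hv : 0 ≤ v) (hw : 0 ≤ w) (huD : u ≤ D) (hvD : v ≤ D) (hwD : w ≤ 2 * D)
    (h : x * (1 + D) ^ (α + 2 * d + 1) ≤ CC) :
    x ≤ CC * 2 ^ α / (1 + w) ^ α * ((1 + u) ^ (-texp d) * (1 + v) ^ (-texp d)) := by
  have hD : 0 ≤ D := le_trans hu huD
  have h1u : (0 : ℝ) < 1 + u := by linarith
  have h1v : (0 : ℝ) < 1 + v := by linarith
  have h1w : (0 : ℝ) < 1 + w := by linarith
  have h1D : (0 : ℝ) < 1 + D := by linarith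
  have ht : (0 : ℝ) ≤ texp d := by unfold texp; positivity
  -- the product bound
  have hfac2 : ((1 + u) * (1 + v)) ^ (texp d) ≤ (1 + D) ^ (2 * d + 1) := by
    calc ((1 + u) * (1 + v)) ^ (texp d)
        ≤ (((1 + D) ^ (2 : ℕ)) : ℝ) ^ (texp d) := by
          apply Real.rpow_le_rpow (by positivity) (by nlinarith) ht
      _ = (1 + D) ^ ((2 : ℝ) * texp d) := by
          rw [← Real.rpow_natCast (1 + D) 2, ← Real.rpow_mul h1D.le]
          norm_num
      _ = (1 + D) ^ (((2 * d + 1 : ℕ) : ℝ)) := by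
          congr 1
          unfold texp
          push_cast
          ring
      _ = (1 + D) ^ (2 * d + 1 : ℕ) := Real.rpow_natCast _ _
  have hfac1 : ((1 + w) / 2) ^ α ≤ (1 + D) ^ α := by
    apply pow_le_pow_left₀ (by positivity)
    linarith
  have hB : ((1 + w) / 2) ^ α * ((1 + u) * (1 + v)) ^ (texp d) ≤ (1 + D) ^ (α + 2 * d + 1) := by
    have : (1 + D) ^ (α + 2 * d + 1) = (1 + D) ^ α * (1 + D) ^ (2 * d + 1) := by
      rw [← pow_add, Nat.add_assoc]
    rw [this]
    exact mul_le_mul hfac1 hfac2 (by positivity) (by positivity)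
  have hB0 : (0 : ℝ) < ((1 + w) / 2) ^ α * ((1 + u) * (1 + v)) ^ (texp d) := by positivity
  have hxB : x * (((1 + w) / 2) ^ α * ((1 + u) * (1 + v)) ^ (texp d)) ≤ CC :=
    le_trans (mul_le_mul_of_nonneg_left hB hx) h
  have hx' : x ≤ CC / (((1 + w) / 2) ^ α * ((1 + u) * (1 + v)) ^ (texp d)) :=
    (le_div_iff₀ hB0).mpr hxB
  refine hx'.trans (le_of_eq ?_)
  rw [← Real.mul_rpow h1u.le h1v.le, Real.rpow_neg (by positivity)]
  rw [div_pow]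
  have hP : (0 : ℝ) < ((1 + u) * (1 + v)) ^ (texp d) := by positivity
  field_simp

set_option maxHeartbeats 1000000 in
/-- Fix `d ≥ 1` and a positive integer `α`.  There is a constant
`C > 0` depending only on `d` and `α` such that: for every Banach space `V`, every
family `(F_X)` in `V` indexed by the bricks of `ℤ^d` (with its sup metric), and all
distinct `j, k ∈ ℤ^d`, if `‖F_X‖ (1 + diam(X ∪ {j}))^{α+2d+1} ≤ C_j` and
`‖F_X‖ (1 + diam(X ∪ {k}))^{α+2d+1} ≤ C_k` for all bricks `X`, then `(F_X)` is
absolutely summable and `‖∑_X F_X‖ ≤ C (C_j + C_k) (1 + d(j,k))^{-α}`. -/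
theorem brick_sum_bound_from_two_point_decay (d α : ℕ) (hd : 1 ≤ d) (hα : 1 ≤ α) :
    ∃ C : ℝ, 0 < C ∧
      ∀ (V : Type u) [NormedAddCommGroup V] [NormedSpace ℝ V] [CompleteSpace V],
        ∀ (F : {X : Set (Fin d → ℤ) // IsBrick d X} → V) (j k : Fin d → ℤ), j ≠ k →
          ∀ Cj Ck : ℝ, 0 ≤ Cj → 0 ≤ Ck →
            (∀ X : {X : Set (Fin d → ℤ) // IsBrick d X},
              ‖F X‖ * (1 + Metric.diam (X.1 ∪ {j})) ^ (α + 2 * d + 1) ≤ Cj) →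
            (∀ X : {X : Set (Fin d → ℤ) // IsBrick d X},
              ‖F X‖ * (1 + Metric.diam (X.1 ∪ {k})) ^ (α + 2 * d + 1) ≤ Ck) →
            Summable (fun X => ‖F X‖) ∧
              ‖∑' X, F X‖ ≤ C * (Cj + Ck) / (1 + dist j k) ^ α := by

  classical
  have hSP := aux3 d hd
  set S0 : ℝ := ∑' z : Fin d → ℤ, ((1 : ℝ) + ‖z‖) ^ (-texp d) with hS0_def
  refine ⟨2 ^ (α + 1) * (S0 ^ 2 + 1), by positivity, ?_⟩
  intro V _ _ _ F j k hjk Cj Ck hCj0 hCk0 hj hk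
  -- shifted summability
  have hshiftS : ∀ p : Fin d → ℤ,
      Summable fun a : Fin d → ℤ => ((1 : ℝ) + dist a p) ^ (-texp d) := by
    intro p
    have h1 := (Equiv.subRight p).summable_iff.mpr hSP
    refine h1.congr fun a => ?_
    simp [Function.comp, Equiv.subRight, dist_eq_norm]
  have hshiftT : ∀ p : Fin d → ℤ,
      (∑' a : Fin d → ℤ, ((1 : ℝ) + dist a p) ^ (-texp d)) = S0 := by
    intro p
    rw [hS0_def, ← (Equiv.subRight p).tsum_eq (fun z : Fin d → ℤ => ((1 : ℝ) + ‖z‖) ^ (-texp d))]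
    refine tsum_congr fun a => ?_
    simp [Equiv.subRight, dist_eq_norm]
  -- the two-sided majorant on pairs
  set H : (Fin d → ℤ) → ((Fin d → ℤ) × (Fin d → ℤ)) → ℝ :=
    fun p q => ((1 : ℝ) + dist q.1 p) ^ (-texp d) * ((1 : ℝ) + dist q.2 p) ^ (-texp d)
    with hH_def
  have hHnn : ∀ p q, 0 ≤ H p q := by
    intro p q
    exact mul_nonneg (Real.rpow_nonneg (by positivity) _) (Real.rpow_nonneg (by positivity) _)
  have hHS : ∀ p, Summable (H p) := by
    intro p
    exact (hshiftS p).mul_of_nonneg (hshiftS p)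
      (fun _ => Real.rpow_nonneg (by positivity) _)
      (fun _ => Real.rpow_nonneg (by positivity) _)
  have hHtsum : ∀ p, (∑' q, H p q) = S0 ^ 2 := by
    intro p
    have h1 := Summable.tsum_mul_tsum (hshiftS p) (hshiftS p) (hHS p)
    simp only [hH_def]
    rw [← h1, hshiftT p]
    ring
  -- corner extraction
  have hcorner : ∀ X : {X : Set (Fin d → ℤ) // IsBrick d X},
      ∃ p : (Fin d → ℤ) × (Fin d → ℤ), (∀ i, p.1 i ≤ p.2 i) ∧
        X.1 = {x | ∀ i, p.1 i ≤ x i ∧ x i ≤ p.2 i} := by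
    intro X
    obtain ⟨a, b, h1, h2⟩ := X.2
    exact ⟨(a, b), h1, h2⟩
  choose φ hφ1 hφ2 using hcorner
  have φinj : Function.Injective φ := by
    intro X Y h
    apply Subtype.ext
    rw [hφ2 X, hφ2 Y, h]
  have memX1 : ∀ X, (φ X).1 ∈ X.1 := by
    intro X
    rw [hφ2 X]
    exact fun i => ⟨le_refl _, hφ1 X i⟩
  have memX2 : ∀ X, (φ X).2 ∈ X.1 := by
    intro X
    rw [hφ2 X]
    exact fun i => ⟨hφ1 X i, le_refl _⟩
  have hfin : ∀ X : {X : Set (Fin d → ℤ) // IsBrick d X}, X.1.Finite := by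
    intro X
    rw [hφ2 X]
    have : {x : Fin d → ℤ | ∀ i, (φ X).1 i ≤ x i ∧ x i ≤ (φ X).2 i} =
        Set.pi Set.univ (fun i => Set.Icc ((φ X).1 i) ((φ X).2 i)) := by
      ext x
      simp only [Set.mem_setOf_eq, Set.mem_pi, Set.mem_univ, Set.mem_Icc, true_implies]
    rw [this]
    exact Set.Finite.pi fun i => Set.finite_Icc _ _
  set K : ℝ := (Cj + Ck) * 2 ^ α / (1 + dist j k) ^ α with hK_def
  have hK0 : 0 ≤ K := by
    have : (0:ℝ) ≤ Cj + Ck := by linarith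
    positivity
  -- the main pointwise bound
  have main : ∀ X : {X : Set (Fin d → ℤ) // IsBrick d X},
      ‖F X‖ ≤ K * (H j (φ X) + H k (φ X)) := by
    intro X
    have hbdj : Bornology.IsBounded (X.1 ∪ {j}) :=
      ((hfin X).union (Set.finite_singleton j)).isBounded
    have hbdk : Bornology.IsBounded (X.1 ∪ {k}) :=
      ((hfin X).union (Set.finite_singleton k)).isBounded
    have haj : dist (φ X).1 j ≤ Metric.diam (X.1 ∪ {j}) :=
      Metric.dist_le_diam_of_mem hbdj (Or.inl (memX1 X)) (Or.inr rfl)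
    have hbj : dist (φ X).2 j ≤ Metric.diam (X.1 ∪ {j}) :=
      Metric.dist_le_diam_of_mem hbdj (Or.inl (memX2 X)) (Or.inr rfl)
    have hak : dist (φ X).1 k ≤ Metric.diam (X.1 ∪ {k}) :=
      Metric.dist_le_diam_of_mem hbdk (Or.inl (memX1 X)) (Or.inr rfl)
    have hbk : dist (φ X).2 k ≤ Metric.diam (X.1 ∪ {k}) :=
      Metric.dist_le_diam_of_mem hbdk (Or.inl (memX2 X)) (Or.inr rfl)
    have htri : dist j k ≤ Metric.diam (X.1 ∪ {j}) + Metric.diam (X.1 ∪ {k}) := by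
      calc dist j k ≤ dist j (φ X).1 + dist (φ X).1 k := dist_triangle _ _ _
        _ ≤ Metric.diam (X.1 ∪ {j}) + Metric.diam (X.1 ∪ {k}) := by
            rw [dist_comm]
            exact add_le_add haj hak
    have hHk0 : 0 ≤ H k (φ X) := hHnn k (φ X)
    have hHj0 : 0 ≤ H j (φ X) := hHnn j (φ X)
    rcases le_total (Metric.diam (X.1 ∪ {k})) (Metric.diam (X.1 ∪ {j})) with hc | hc
    · have hkey := key_ineq d α (norm_nonneg (F X)) dist_nonneg dist_nonneg dist_nonneg
        haj hbj (by linarith) (hj X)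
      calc ‖F X‖ ≤ Cj * 2 ^ α / (1 + dist j k) ^ α *
            ((1 + dist (φ X).1 j) ^ (-texp d) * (1 + dist (φ X).2 j) ^ (-texp d)) := hkey
        _ ≤ K * (H j (φ X) + H k (φ X)) := by
            rw [hK_def, hH_def]
            have h1 : (0:ℝ) < (1 + dist j k) ^ α := by positivity
            have h2 : Cj * 2 ^ α / (1 + dist j k) ^ α ≤ (Cj + Ck) * 2 ^ α / (1 + dist j k) ^ α := by
              gcongr
              linarith
            refine le_trans (mul_le_mul_of_nonneg_left (le_add_of_nonneg_right hHk0) ?_)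
              (mul_le_mul_of_nonneg_right h2 ?_)
            · positivity
            · exact add_nonneg hHj0 hHk0
    · have hkey := key_ineq d α (norm_nonneg (F X)) dist_nonneg dist_nonneg dist_nonneg
        hak hbk (by linarith) (hk X)
      calc ‖F X‖ ≤ Ck * 2 ^ α / (1 + dist j k) ^ α *
            ((1 + dist (φ X).1 k) ^ (-texp d) * (1 + dist (φ X).2 k) ^ (-texp d)) := hkey
        _ ≤ K * (H j (φ X) + H k (φ X)) := by
            rw [hK_def, hH_def]
            have h2 : Ck * 2 ^ α / (1 + dist j k) ^ α ≤ (Cj + Ck) * 2 ^ α / (1 + dist j k) ^ α := by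
              gcongr
              linarith
            refine le_trans (mul_le_mul_of_nonneg_left (le_add_of_nonneg_left hHj0) ?_)
              (mul_le_mul_of_nonneg_right h2 ?_)
            · positivity
            · exact add_nonneg hHj0 hHk0
  -- summability
  have hHjk : Summable fun q => H j q + H k q := (hHS j).add (hHS k)
  have hmajS : Summable fun X : {X : Set (Fin d → ℤ) // IsBrick d X} =>
      K * (H j (φ X) + H k (φ X)) := ((hHjk.comp_injective φinj).mul_left K)
  have hnorms : Summable fun X : {X : Set (Fin d → ℤ) // IsBrick d X} => ‖F X‖ :=
    Summable.of_nonneg_of_le (fun X => norm_nonneg _) main hmajS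
  refine ⟨hnorms, ?_⟩
  have step1 : ‖∑' X, F X‖ ≤ ∑' X, ‖F X‖ := norm_tsum_le_tsum_norm hnorms
  have step2 : (∑' X, ‖F X‖) ≤ ∑' X, K * (H j (φ X) + H k (φ X)) :=
    Summable.tsum_le_tsum main hnorms hmajS
  have step3 : (∑' X, K * (H j (φ X) + H k (φ X))) =
      K * ∑' X, (H j (φ X) + H k (φ X)) := tsum_mul_left
  have step4 : (∑' X, (H j (φ X) + H k (φ X))) ≤ ∑' q, (H j q + H k q) := by
    refine Summable.tsum_le_tsum_of_inj φ φinj (fun c _ => add_nonneg (hHnn j c) (hHnn k c))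
      (fun X => le_rfl) (hHjk.comp_injective φinj) hHjk
  have step5 : (∑' q, (H j q + H k q)) = S0 ^ 2 + S0 ^ 2 := by
    rw [Summable.tsum_add (hHS j) (hHS k), hHtsum j, hHtsum k]
  have chain : ‖∑' X, F X‖ ≤ K * (S0 ^ 2 + S0 ^ 2) := by
    calc ‖∑' X, F X‖ ≤ ∑' X, ‖F X‖ := step1
      _ ≤ ∑' X, K * (H j (φ X) + H k (φ X)) := step2
      _ = K * ∑' X, (H j (φ X) + H k (φ X)) := step3
      _ ≤ K * ∑' q, (H j q + H k q) := mul_le_mul_of_nonneg_left step4 hK0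
      _ = K * (S0 ^ 2 + S0 ^ 2) := by rw [step5]
  refine chain.trans ?_
  have hfin : K * (S0 ^ 2 + S0 ^ 2) ≤ K * (2 * (S0 ^ 2 + 1)) := by
    refine mul_le_mul_of_nonneg_left (by nlinarith) hK0
  refine hfin.trans (le_of_eq ?_)
  rw [hK_def]
  ring
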